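/- Let X_1, ..., X_n be Bernoulli random variables adapted to a filtration F_1, ..., F_n, and let λ ∈ (0, 1]. Let E_λ be the event that E[X_s | F_{s-1}] ≥ λ for all s ∈ {1, ..., n}. Then P((∑_{s=1}^{n} X_s ≤ n λ / 2) ∧ E_λ) ≤ e^{-n λ / 8}. -/

import Mathlib

open MeasureTheory

section Aux
variable {Ω : Type*} {m0 : MeasurableSpace Ω}
    (μ : Measure Ω) [IsProbabilityMeasure μ] (ℱ : Filtration ℕ m0)
    (X : ℕ → Ω → ℝ) (lam : ℝ)

/-- auxiliary weight factor -/
noncomputable def gfun : ℕ → Ω → ℝ := fun s ω =>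
  if lam ≤ (μ[X s | ℱ (s - 1)]) ω then (1 - X s ω / 2) * (1 - lam / 2)⁻¹ else 0

/-- auxiliary supermartingale-like weight -/
noncomputable def Wfun : ℕ → Ω → ℝ := fun t ω => ∏ s ∈ Finset.Icc 1 t, gfun μ ℱ X lam s ω

variable {μ ℱ X lam}

lemma gfun_meas (hadapt : ∀ s, Measurable[ℱ s] (X s)) (s : ℕ) :
    Measurable[ℱ s] (gfun μ ℱ X lam s) := by
  have hA : MeasurableSet[ℱ (s-1)] {ω | lam ≤ (μ[X s | ℱ (s - 1)]) ω} :=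
    measurableSet_le measurable_const stronglyMeasurable_condExp.measurable
  exact Measurable.ite (ℱ.mono (Nat.sub_le s 1) _ hA)
    (((measurable_const.sub ((hadapt s).div_const 2))).mul_const _) measurable_const

lemma gfun_nonneg (hBern : ∀ s ω, X s ω = 0 ∨ X s ω = 1) (hlam1 : lam ≤ 1)
    (s : ℕ) (ω : Ω) : 0 ≤ gfun μ ℱ X lam s ω := by
  have hq : (0:ℝ) < 1 - lam / 2 := by linarith
  unfold gfun
  split
  · rcases hBern s ω with h | h <;> rw [h] <;> positivity
  · norm_num

lemma gfun_le_two (hBern : ∀ s ω, X s ω = 0 ∨ X s ω = 1) (hlam0 : 0 < lam) (hlam1 : lam ≤ 1)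
    (s : ℕ) (ω : Ω) : gfun μ ℱ X lam s ω ≤ 2 := by
  have hq : (0:ℝ) < 1 - lam / 2 := by linarith
  have h1 : (1 - lam / 2)⁻¹ ≤ 2 := by
    rw [inv_le_comm₀ hq (by norm_num)]; linarith
  have h0 : (0:ℝ) ≤ (1 - lam / 2)⁻¹ := by positivity
  unfold gfun
  split
  · rcases hBern s ω with h | h <;> rw [h] <;> nlinarith
  · norm_num

lemma Wfun_meas (hadapt : ∀ s, Measurable[ℱ s] (X s)) (t : ℕ) :
    Measurable[ℱ t] (Wfun μ ℱ X lam t) := by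
  unfold Wfun
  exact Finset.measurable_prod _ fun s hs =>
    (gfun_meas hadapt s).mono (ℱ.mono (Finset.mem_Icc.1 hs).2) le_rfl

lemma Wfun_nonneg (hBern : ∀ s ω, X s ω = 0 ∨ X s ω = 1) (hlam1 : lam ≤ 1)
    (t : ℕ) (ω : Ω) : 0 ≤ Wfun μ ℱ X lam t ω :=
  Finset.prod_nonneg fun s _ => gfun_nonneg hBern hlam1 s ω

lemma Wfun_le (hBern : ∀ s ω, X s ω = 0 ∨ X s ω = 1) (hlam0 : 0 < lam) (hlam1 : lam ≤ 1)
    (t : ℕ) (ω : Ω) : Wfun μ ℱ X lam t ω ≤ 2 ^ t := by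
  unfold Wfun
  calc (∏ s ∈ Finset.Icc 1 t, gfun μ ℱ X lam s ω) ≤ ∏ _s ∈ Finset.Icc 1 t, (2:ℝ) :=
        Finset.prod_le_prod (fun s _ => gfun_nonneg hBern hlam1 s ω)
          (fun s _ => gfun_le_two hBern hlam0 hlam1 s ω)
    _ = 2 ^ t := by rw [Finset.prod_const, Nat.card_Icc, Nat.add_sub_cancel]

lemma Wfun_int (hadapt : ∀ s, Measurable[ℱ s] (X s))
    (hBern : ∀ s ω, X s ω = 0 ∨ X s ω = 1) (hlam0 : 0 < lam) (hlam1 : lam ≤ 1)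
    (t : ℕ) : Integrable (Wfun μ ℱ X lam t) μ := by
  refine (integrable_const ((2:ℝ) ^ t)).mono'
    (((Wfun_meas hadapt t).mono (ℱ.le t) le_rfl).aestronglyMeasurable) (ae_of_all _ fun ω => ?_)
  rw [Real.norm_eq_abs, abs_of_nonneg (Wfun_nonneg hBern hlam1 t ω)]
  exact Wfun_le hBern hlam0 hlam1 t ω

lemma X_int (hadapt : ∀ s, Measurable[ℱ s] (X s))
    (hBern : ∀ s ω, X s ω = 0 ∨ X s ω = 1) (s : ℕ) : Integrable (X s) μ := by
  refine (integrable_const (1:ℝ)).mono'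
    (((hadapt s).mono (ℱ.le s) le_rfl).aestronglyMeasurable) (ae_of_all _ fun ω => ?_)
  rcases hBern s ω with h | h <;> rw [h] <;> norm_num

lemma Wfun_integral_le_one (hadapt : ∀ s, Measurable[ℱ s] (X s))
    (hBern : ∀ s ω, X s ω = 0 ∨ X s ω = 1) (hlam0 : 0 < lam) (hlam1 : lam ≤ 1)
    (t : ℕ) : ∫ ω, Wfun μ ℱ X lam t ω ∂μ ≤ 1 := by
  induction t with
  | zero => simp [Wfun]
  | succ t ih =>
    have hq : (0:ℝ) < 1 - lam / 2 := by linarith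
    set F : Ω → ℝ := fun ω =>
      (if lam ≤ (μ[X (t+1) | ℱ t]) ω then (1 - lam / 2)⁻¹ else 0) * Wfun μ ℱ X lam t ω with hF
    set Y : Ω → ℝ := fun ω => 1 - X (t+1) ω / 2 with hYdef
    have hsub : (t + 1) - 1 = t := rfl
    have hsplit : ∀ ω, Wfun μ ℱ X lam (t+1) ω = F ω * Y ω := by
      intro ω
      have h0 : Wfun μ ℱ X lam (t+1) ω = Wfun μ ℱ X lam t ω * gfun μ ℱ X lam (t+1) ω := by
        unfold Wfun; exact Finset.prod_Icc_succ_top (Nat.succ_le_succ (Nat.zero_le t)) _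
      rw [h0, hF, hYdef]
      unfold gfun
      rw [hsub]
      by_cases h : lam ≤ (μ[X (t+1) | ℱ t]) ω
      · simp only [if_pos h]; ring
      · simp only [if_neg h]; ring
    have hFm : Measurable[ℱ t] F := by
      have hA : MeasurableSet[ℱ t] {ω | lam ≤ (μ[X (t+1) | ℱ t]) ω} :=
        measurableSet_le measurable_const stronglyMeasurable_condExp.measurable
      exact (Measurable.ite hA measurable_const measurable_const).mul (Wfun_meas hadapt t)
    have hYint : Integrable Y μ :=
      (integrable_const (1:ℝ)).sub ((X_int hadapt hBern (t+1)).div_const 2)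
    have hFYint : Integrable (F * Y) μ := by
      refine (Wfun_int hadapt hBern hlam0 hlam1 (t+1)).congr (ae_of_all _ fun ω => ?_)
      rw [hsplit ω]; rfl
    have heq1 : μ[F * Y | ℱ t] =ᵐ[μ] F * μ[Y | ℱ t] :=
      condExp_mul_of_stronglyMeasurable_left hFm.stronglyMeasurable hFYint hYint
    have heq2 : μ[Y | ℱ t] =ᵐ[μ] fun ω => 1 - (μ[X (t+1) | ℱ t]) ω / 2 := by
      have h1 : μ[Y | ℱ t] =ᵐ[μ] μ[(fun _ => (1:ℝ)) | ℱ t] - μ[(fun ω => X (t+1) ω / 2) | ℱ t] :=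
        condExp_sub (integrable_const 1) ((X_int hadapt hBern (t+1)).div_const 2) (ℱ t)
      have h2 : μ[(fun ω => X (t+1) ω / 2) | ℱ t] =ᵐ[μ] fun ω => (μ[X (t+1) | ℱ t]) ω / 2 := by
        have h3 := condExp_smul (μ := μ) (m := ℱ t) (2⁻¹ : ℝ) (X (t+1))
        refine (condExp_congr_ae (ae_of_all _ fun ω => ?_)).trans (h3.trans ?_)
        · show X (t+1) ω / 2 = ((2⁻¹ : ℝ) • X (t+1)) ω
          simp [smul_eq_mul]; ring
        · exact ae_of_all _ fun ω => by simp [smul_eq_mul]; ring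
      have h3 : μ[(fun _ => (1:ℝ)) | ℱ t] = fun _ => (1:ℝ) := condExp_const (ℱ.le t) 1
      filter_upwards [h1, h2] with ω hω1 hω2
      rw [hω1]; simp only [Pi.sub_apply, h3, hω2]
    have heq3 : F * μ[Y | ℱ t] =ᵐ[μ] fun ω => F ω * (1 - (μ[X (t+1) | ℱ t]) ω / 2) := by
      filter_upwards [heq2] with ω hω
      simp only [Pi.mul_apply, hω]
    have hLint : Integrable (fun ω => F ω * (1 - (μ[X (t+1) | ℱ t]) ω / 2)) μ :=
      integrable_condExp.congr (heq1.trans heq3)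
    have hpt : ∀ ω, F ω * (1 - (μ[X (t+1) | ℱ t]) ω / 2) ≤ Wfun μ ℱ X lam t ω := by
      intro ω
      simp only [hF]
      by_cases h : lam ≤ (μ[X (t+1) | ℱ t]) ω
      · simp only [if_pos h]
        have hr : (1 - (μ[X (t+1) | ℱ t]) ω / 2) * (1 - lam / 2)⁻¹ ≤ 1 := by
          rw [← div_eq_mul_inv, div_le_one hq]; linarith
        calc (1 - lam / 2)⁻¹ * Wfun μ ℱ X lam t ω * (1 - (μ[X (t+1) | ℱ t]) ω / 2)
            = Wfun μ ℱ X lam t ω * ((1 - (μ[X (t+1) | ℱ t]) ω / 2) * (1 - lam / 2)⁻¹) := by ring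
          _ ≤ Wfun μ ℱ X lam t ω * 1 :=
              mul_le_mul_of_nonneg_left hr (Wfun_nonneg hBern hlam1 t ω)
          _ = Wfun μ ℱ X lam t ω := mul_one _
      · simp only [if_neg h, zero_mul, mul_zero]
        simpa using Wfun_nonneg hBern hlam1 t ω
    calc ∫ ω, Wfun μ ℱ X lam (t+1) ω ∂μ = ∫ ω, (F * Y) ω ∂μ :=
          integral_congr_ae (ae_of_all _ fun ω => hsplit ω)
      _ = ∫ ω, (μ[F * Y | ℱ t]) ω ∂μ := (integral_condExp (ℱ.le t)).symm
      _ = ∫ ω, F ω * (1 - (μ[X (t+1) | ℱ t]) ω / 2) ∂μ :=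
          integral_congr_ae (heq1.trans heq3)
      _ ≤ ∫ ω, Wfun μ ℱ X lam t ω ∂μ :=
          integral_mono hLint (Wfun_int hadapt hBern hlam0 hlam1 t) hpt
      _ ≤ 1 := ih

end Aux

/-- Concentration bound for adapted Bernoulli variables: if on the event `E_λ` each
conditional expectation `E[X_s | F_{s-1}]` is at least `λ`, then the probability that
`∑_{s=1}^n X_s ≤ nλ/2` and `E_λ` holds is at most `e^{-nλ/8}`. -/
theorem bernoulli_adapted_concentration {Ω : Type*} {m0 : MeasurableSpace Ω}
    (μ : Measure Ω) [IsProbabilityMeasure μ] (ℱ : Filtration ℕ m0)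
    (n : ℕ) (X : ℕ → Ω → ℝ)
    (hadapt : ∀ s, Measurable[ℱ s] (X s))
    (hBern : ∀ s ω, X s ω = 0 ∨ X s ω = 1)
    (lam : ℝ) (hlam0 : 0 < lam) (hlam1 : lam ≤ 1) :
    μ {ω | (∑ s ∈ Finset.Icc 1 n, X s ω ≤ (n : ℝ) * lam / 2) ∧
        ∀ s ∈ Finset.Icc 1 n, lam ≤ (μ[X s | ℱ (s - 1)]) ω} ≤
      ENNReal.ofReal (Real.exp (-((n : ℝ) * lam) / 8)) := by
  have hq : (0:ℝ) < 1 - lam / 2 := by linarith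
  set c : ℝ := Real.exp (-(Real.log 2) * ((n : ℝ) * lam / 2)) * ((1 - lam / 2)⁻¹) ^ n with hc
  have hcpos : 0 < c := mul_pos (Real.exp_pos _) (pow_pos (inv_pos.2 hq) n)
  have hlog : (0:ℝ) < Real.log 2 := Real.log_pos (by norm_num)
  -- the event is contained in {c ≤ W n}
  have hsub : {ω | (∑ s ∈ Finset.Icc 1 n, X s ω ≤ (n : ℝ) * lam / 2) ∧
      ∀ s ∈ Finset.Icc 1 n, lam ≤ (μ[X s | ℱ (s - 1)]) ω} ⊆
      {ω | c ≤ Wfun μ ℱ X lam n ω} := by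
    rintro ω ⟨hsum, hall⟩
    have hWeq : Wfun μ ℱ X lam n ω =
        Real.exp (-(Real.log 2) * ∑ s ∈ Finset.Icc 1 n, X s ω) * ((1 - lam / 2)⁻¹) ^ n := by
      unfold Wfun gfun
      calc (∏ s ∈ Finset.Icc 1 n,
          if lam ≤ (μ[X s | ℱ (s - 1)]) ω then (1 - X s ω / 2) * (1 - lam / 2)⁻¹ else 0)
          = ∏ s ∈ Finset.Icc 1 n, Real.exp (-(Real.log 2) * X s ω) * (1 - lam / 2)⁻¹ := by
            refine Finset.prod_congr rfl fun s hs => ?_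
            rw [if_pos (hall s hs)]
            rcases hBern s ω with h | h <;> rw [h]
            · simp
            · rw [mul_one, Real.exp_neg, Real.exp_log (by norm_num)]; norm_num
        _ = Real.exp (-(Real.log 2) * ∑ s ∈ Finset.Icc 1 n, X s ω) * ((1 - lam / 2)⁻¹) ^ n := by
            rw [Finset.prod_mul_distrib, Finset.prod_const, Nat.card_Icc,
              Nat.add_sub_cancel, ← Real.exp_sum, Finset.mul_sum]
    rw [Set.mem_setOf_eq, hWeq, hc]
    refine mul_le_mul_of_nonneg_right ?_ (pow_nonneg (inv_nonneg.2 hq.le) n)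
    rw [Real.exp_le_exp]
    nlinarith
  have hmarkov := mul_meas_ge_le_integral_of_nonneg
    (ae_of_all _ (Wfun_nonneg (μ := μ) (ℱ := ℱ) hBern hlam1 n))
    (Wfun_int hadapt hBern hlam0 hlam1 n) c
  have hint := Wfun_integral_le_one hadapt hBern hlam0 hlam1 (μ := μ) (ℱ := ℱ) (X := X) n
  have hE : (μ {ω | (∑ s ∈ Finset.Icc 1 n, X s ω ≤ (n : ℝ) * lam / 2) ∧
      ∀ s ∈ Finset.Icc 1 n, lam ≤ (μ[X s | ℱ (s - 1)]) ω}).toReal ≤ 1 / c := by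
    have h1 : (μ {ω | (∑ s ∈ Finset.Icc 1 n, X s ω ≤ (n : ℝ) * lam / 2) ∧
        ∀ s ∈ Finset.Icc 1 n, lam ≤ (μ[X s | ℱ (s - 1)]) ω}).toReal ≤
        (μ {ω | c ≤ Wfun μ ℱ X lam n ω}).toReal :=
      ENNReal.toReal_mono (measure_ne_top μ _) (measure_mono hsub)
    have h2 : (μ {ω | c ≤ Wfun μ ℱ X lam n ω}).toReal ≤ 1 / c := by
      rw [le_div_iff₀ hcpos, mul_comm]
      exact hmarkov.trans hint
    linarith
  rw [ENNReal.le_ofReal_iff_toReal_le (measure_ne_top μ _) (Real.exp_nonneg _)]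
  refine hE.trans ?_
  -- numeric: 1/c ≤ exp(-nλ/8)
  have h1c : 1 / c = Real.exp (Real.log 2 * ((n : ℝ) * lam / 2)) * (1 - lam / 2) ^ n := by
    rw [hc, one_div, mul_inv, ← Real.exp_neg, neg_mul, neg_neg, ← inv_pow, inv_inv]
  rw [h1c]
  have hexp : (1 - lam / 2) ^ n ≤ Real.exp (-((n : ℝ) * lam / 2)) := by
    have h1 : 1 - lam / 2 ≤ Real.exp (-(lam / 2)) := by
      have := Real.add_one_le_exp (-(lam / 2)); linarith
    calc (1 - lam / 2) ^ n ≤ Real.exp (-(lam / 2)) ^ n := pow_le_pow_left₀ hq.le h1 n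
      _ = Real.exp (-((n : ℝ) * lam / 2)) := by
          rw [← Real.exp_nat_mul]; ring_nf
  calc Real.exp (Real.log 2 * ((n : ℝ) * lam / 2)) * (1 - lam / 2) ^ n
      ≤ Real.exp (Real.log 2 * ((n : ℝ) * lam / 2)) * Real.exp (-((n : ℝ) * lam / 2)) :=
        mul_le_mul_of_nonneg_left hexp (Real.exp_nonneg _)
    _ = Real.exp (Real.log 2 * ((n : ℝ) * lam / 2) - (n : ℝ) * lam / 2) := by
        rw [← Real.exp_add]; ring_nf
    _ ≤ Real.exp (-((n : ℝ) * lam) / 8) := by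
        rw [Real.exp_le_exp]
        have hlog2 := Real.log_two_lt_d9
        have hn : (0:ℝ) ≤ (n : ℝ) * lam := by positivity
        nlinarith
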